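/- Let |X| = n, |Y| = m, |Z| = k with Z ⊆ Y ⊆ X finite nonempty. Then the number of regular elements of T(X,Y,Z) equals Σ_{r=1}^{k} C(k,r) · r! · S(k,r) · r^(m−k) · (n−m+r)^(n−m). -/
import Mathlib


/-- Stirling numbers of the second kind. -/
def stirling2 : ℕ → ℕ → ℕ
  | 0, 0 => 1
  | 0, _ + 1 => 0
  | _ + 1, 0 => 0
  | n + 1, k + 1 => (k + 1) * stirling2 n (k + 1) + stirling2 n k

open Finset

def nsurj (k r : ℕ) : ℕ :=
  #(Finset.univ.filter fun f : Fin k → Fin r => Finset.univ.image f = Finset.univ)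

lemma card_filter_image_eq {α β : Type*} [Fintype α] [DecidableEq α] [Fintype β] [DecidableEq β]
    (B : Finset β) :
    #(Finset.univ.filter fun f : α → β => Finset.univ.image f = B) =
      nsurj (Fintype.card α) B.card := by
  classical
  set k := Fintype.card α with hkdef
  set r := B.card
  let e : α ≃ Fin k := Fintype.equivFin α
  let eB : {x // x ∈ B} ≃ Fin r := B.equivFin
  have key : ∀ (f : α → β), Finset.univ.image f = B → ∀ a, f a ∈ B := by
    intro f hf a; rw [← hf]; exact Finset.mem_image_of_mem f (mem_univ a)
  refine Finset.card_bij'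
    (i := fun f hf => fun j : Fin k =>
      eB ⟨f (e.symm j), key f (mem_filter.mp hf).2 _⟩)
    (j := fun g _ => fun a : α => ((eB.symm (g (e a)) : {x // x ∈ B}) : β))
    ?_ ?_ ?_ ?_
  case refine_1 =>
    intro f hf
    have hf' : Finset.univ.image f = B := (mem_filter.mp hf).2
    simp only [mem_filter, mem_univ, true_and]
    apply Finset.eq_univ_of_forall
    intro y
    have hby : ((eB.symm y : {x // x ∈ B}) : β) ∈ Finset.univ.image f := by
      rw [hf']; exact (eB.symm y).2
    obtain ⟨a, -, ha⟩ := Finset.mem_image.mp hby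
    refine Finset.mem_image.mpr ⟨e a, mem_univ _, ?_⟩
    have h2 : (⟨f (e.symm (e a)), key f hf' _⟩ : {x // x ∈ B}) = eB.symm y := by
      ext; simp [ha]
    rw [h2, Equiv.apply_symm_apply]
  case refine_2 =>
    intro g hg
    have hg' : Finset.univ.image g = Finset.univ := (mem_filter.mp hg).2
    simp only [mem_filter, mem_univ, true_and]
    apply Finset.Subset.antisymm
    · intro b hb
      obtain ⟨a, -, ha⟩ := Finset.mem_image.mp hb
      rw [← ha]; exact (eB.symm (g (e a))).2
    · intro b hb
      have : eB ⟨b, hb⟩ ∈ Finset.univ.image g := by rw [hg']; exact mem_univ _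
      obtain ⟨j, -, hj⟩ := Finset.mem_image.mp this
      refine Finset.mem_image.mpr ⟨e.symm j, mem_univ _, ?_⟩
      simp [hj]
  case refine_3 =>
    intro f hf
    funext a
    simp
  case refine_4 =>
    intro g hg
    funext j
    simp only [Equiv.apply_symm_apply]
    congr 1
    ext
    simp

lemma nsurj_zero_right (k : ℕ) : nsurj (k + 1) 0 = 0 := by
  unfold nsurj
  rw [Finset.card_eq_zero, Finset.filter_eq_empty_iff]
  intro f _
  exact (f 0).elim0

lemma nsurj_zero_left (r : ℕ) : nsurj 0 (r + 1) = 0 := by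
  unfold nsurj
  rw [Finset.card_eq_zero, Finset.filter_eq_empty_iff]
  intro f _ h
  have : (0 : Fin (r+1)) ∈ Finset.univ.image f := h ▸ mem_univ _
  obtain ⟨a, -, -⟩ := Finset.mem_image.mp this
  exact a.elim0

lemma nsurj_zero_zero : nsurj 0 0 = 1 := by decide

lemma image_cons_univ {k : ℕ} {β : Type*} [DecidableEq β] (b : β) (g : Fin k → β) :
    Finset.univ.image (Fin.cons b g : Fin (k+1) → β) = insert b (Finset.univ.image g) := by
  ext y
  simp [Finset.mem_image, Fin.exists_fin_succ, Fin.cons_succ, Fin.cons_zero, eq_comm]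

lemma nsurj_succ (k s : ℕ) :
    nsurj (k + 1) (s + 1) = (s + 1) * (nsurj k (s + 1) + nsurj k s) := by
  classical
  have hfib : ∀ b : Fin (s+1),
      #(Finset.univ.filter (fun f : Fin (k+1) → Fin (s+1) =>
          Finset.univ.image f = Finset.univ ∧ f 0 = b)) =
        nsurj k (s+1) + nsurj k s := by
    intro b
    have step1 : #(Finset.univ.filter (fun f : Fin (k+1) → Fin (s+1) =>
          Finset.univ.image f = Finset.univ ∧ f 0 = b)) =
        #(Finset.univ.filter (fun g : Fin k → Fin (s+1) =>
          insert b (Finset.univ.image g) = Finset.univ)) := by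
      refine Finset.card_bij' (i := fun f _ => Fin.tail f) (j := fun g _ => Fin.cons b g)
        ?_ ?_ ?_ ?_
      · intro f hf
        obtain ⟨-, him, h0⟩ := mem_filter.mp hf
        subst h0
        simp only [mem_filter, mem_univ, true_and]
        rw [← image_cons_univ, Fin.cons_self_tail]
        exact him
      · intro g hg
        obtain ⟨-, him⟩ := mem_filter.mp hg
        simp only [mem_filter, mem_univ, true_and]
        constructor
        · rw [image_cons_univ]; exact him
        · simp
      · intro f hf
        obtain ⟨-, -, h0⟩ := mem_filter.mp hf
        subst h0
        exact Fin.cons_self_tail f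
      · intro g hg
        simp
    rw [step1]
    have split : (Finset.univ.filter (fun g : Fin k → Fin (s+1) =>
          insert b (Finset.univ.image g) = Finset.univ)) =
        (Finset.univ.filter (fun g : Fin k → Fin (s+1) =>
          Finset.univ.image g = Finset.univ)) ∪
        (Finset.univ.filter (fun g : Fin k → Fin (s+1) =>
          Finset.univ.image g = Finset.univ.erase b)) := by
      ext g
      simp only [mem_filter, mem_univ, true_and, mem_union]
      constructor
      · intro h
        by_cases hb : Finset.univ.image g = Finset.univ
        · exact Or.inl hb
        · refine Or.inr ?_
          have hbS : b ∉ Finset.univ.image g := fun hbS =>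
            hb (by rw [← h, Finset.insert_eq_self.mpr hbS])
          apply Finset.Subset.antisymm
          · intro x hx
            exact Finset.mem_erase.mpr ⟨fun e => hbS (e ▸ hx), mem_univ _⟩
          · intro x hx
            obtain ⟨hxb, -⟩ := Finset.mem_erase.mp hx
            have hy : x ∈ insert b (Finset.univ.image g) := h ▸ mem_univ _
            rcases Finset.mem_insert.mp hy with rfl | hy'
            · exact absurd rfl hxb
            · exact hy'
      · rintro (h | h)
        · rw [h]; exact Finset.insert_eq_self.mpr (mem_univ _)
        · rw [h, Finset.insert_erase (mem_univ _)]
    have hdisj : Disjoint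
        (Finset.univ.filter (fun g : Fin k → Fin (s+1) =>
          Finset.univ.image g = Finset.univ))
        (Finset.univ.filter (fun g : Fin k → Fin (s+1) =>
          Finset.univ.image g = Finset.univ.erase b)) := by
      rw [Finset.disjoint_filter]
      intro g _ h1 h2
      rw [h1] at h2
      have hb : b ∈ Finset.univ.erase b := h2 ▸ mem_univ b
      exact absurd rfl (Finset.mem_erase.mp hb).1
    rw [split, Finset.card_union_of_disjoint hdisj]
    have h2 := card_filter_image_eq (α := Fin k) (β := Fin (s+1)) (Finset.univ.erase b)
    rw [Finset.card_erase_of_mem (mem_univ _), Finset.card_univ, Fintype.card_fin,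
      Fintype.card_fin, Nat.add_sub_cancel] at h2
    rw [h2]
    rfl
  have key : nsurj (k+1) (s+1) = ∑ b : Fin (s+1),
      #(Finset.univ.filter (fun f : Fin (k+1) → Fin (s+1) =>
          Finset.univ.image f = Finset.univ ∧ f 0 = b)) := by
    unfold nsurj
    rw [Finset.card_eq_sum_card_fiberwise
      (f := fun f : Fin (k+1) → Fin (s+1) => f 0) (t := Finset.univ) (fun _ _ => mem_univ _)]
    exact Finset.sum_congr rfl (fun b _ => by rw [Finset.filter_filter])
  rw [key, Finset.sum_congr rfl (fun b _ => hfib b), Finset.sum_const, Finset.card_univ,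
    Fintype.card_fin, smul_eq_mul]

lemma nsurj_eq (k r : ℕ) : nsurj k r = r.factorial * stirling2 k r := by
  induction k generalizing r with
  | zero =>
    cases r with
    | zero => simp [nsurj_zero_zero, stirling2]
    | succ s => simp [nsurj_zero_left, stirling2]
  | succ k ih =>
    cases r with
    | zero => simp [nsurj_zero_right, stirling2]
    | succ s =>
      rw [nsurj_succ, ih (s+1), ih s, stirling2]
      rw [Nat.factorial_succ]
      ring

lemma card_filter_pi {X : Type*} [Fintype X] [DecidableEq X] (s : X → Finset X) :
    #(Finset.univ.filter fun α : X → X => ∀ x, α x ∈ s x) = ∏ x, #(s x) := by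
  classical
  rw [← Fintype.card_subtype]
  rw [Fintype.card_congr (Equiv.subtypePiEquivPi (p := fun x b => b ∈ s x))]
  simp [Fintype.card_pi]

lemma reg_iff {X : Type*} (Y Z : Finset X) (hZ : Z.Nonempty) (α : X → X)
    (hT : ∀ y ∈ Y, α y ∈ Z) :
    (∃ β : X → X, (∀ y ∈ Y, β y ∈ Z) ∧ α ∘ β ∘ α = α) ↔
      ∀ x, α x ∈ Y → ∃ z ∈ Z, α z = α x := by
  classical
  constructor
  · rintro ⟨β, hβ, hcomp⟩ x hx
    exact ⟨β (α x), hβ _ hx, congrFun hcomp x⟩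
  · intro h
    obtain ⟨z₀, hz₀⟩ := hZ
    refine ⟨fun t => if h1 : ∃ z ∈ Z, α z = t then h1.choose else
      if h2 : ∃ x, α x = t then h2.choose else z₀, ?_, ?_⟩
    · intro y hy
      by_cases h1 : ∃ z ∈ Z, α z = y
      · simp only [dif_pos h1]; exact h1.choose_spec.1
      · simp only [dif_neg h1]
        by_cases h2 : ∃ x, α x = y
        · exfalso
          apply h1
          have hy' : α h2.choose ∈ Y := by rw [h2.choose_spec]; exact hy
          obtain ⟨z, hzZ, hz⟩ := h _ hy'
          exact ⟨z, hzZ, by rw [hz, h2.choose_spec]⟩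
        · simp only [dif_neg h2]; exact hz₀
    · funext x
      simp only [Function.comp_apply]
      by_cases h1 : ∃ z ∈ Z, α z = α x
      · simp only [dif_pos h1]; exact h1.choose_spec.2
      · have h2 : ∃ x', α x' = α x := ⟨x, rfl⟩
        simp only [dif_neg h1, dif_pos h2]
        exact h2.choose_spec

/-- The number of regular elements of T(X,Y,Z) equals
∑_{r=1}^{k} C(k,r)·r!·S(k,r)·r^(m−k)·(n−m+r)^(n−m). -/
theorem stmt_17 {X : Type*} [Fintype X] [DecidableEq X] (Y Z : Finset X)
    (hZY : Z ⊆ Y) (hZ : Z.Nonempty)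
    (n m k : ℕ) (hn : Fintype.card X = n) (hm : Y.card = m) (hk : Z.card = k) :
    Nat.card {α : X → X // (∀ y ∈ Y, α y ∈ Z) ∧
        ∃ β : X → X, (∀ y ∈ Y, β y ∈ Z) ∧ α ∘ β ∘ α = α} =
      ∑ r ∈ Finset.Icc 1 k,
        k.choose r * r.factorial * stirling2 k r * r ^ (m - k) *
          (n - m + r) ^ (n - m) := by
  classical
  subst hn hm hk
  set n := Fintype.card X with hn
  set m := Y.card with hm
  set k := Z.card with hk
  clear_value n m k
  have hk1 : 1 ≤ k := hk ▸ hZ.card_pos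
  have hmk : k ≤ m := by rw [hk, hm]; exact Finset.card_le_card hZY
  have hnm : m ≤ n := by rw [hm, hn, ← Finset.card_univ]; exact Finset.card_le_card (subset_univ Y)
  set P : (X → X) → Prop := fun α =>
    (∀ y ∈ Y, α y ∈ Z) ∧ ∀ x, α x ∈ Y → ∃ z ∈ Z, α z = α x with hP
  -- Step 0 : Nat.card via characterization
  have h0 : Nat.card {α : X → X // (∀ y ∈ Y, α y ∈ Z) ∧
      ∃ β : X → X, (∀ y ∈ Y, β y ∈ Z) ∧ α ∘ β ∘ α = α} = #(Finset.univ.filter P) := by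
    rw [Nat.card_congr (Equiv.subtypeEquivRight (q := P) (fun α =>
      and_congr_right (fun hT => reg_iff Y Z hZ α hT)))]
    rw [Nat.card_eq_fintype_card, Fintype.card_subtype]
  rw [h0]
  -- Step 1 : fiber over restriction to Z
  set B : Finset ({x // x ∈ Z} → X) :=
    Finset.univ.filter (fun f => ∀ z : {x // x ∈ Z}, f z ∈ Z) with hB
  set res : (X → X) → ({x // x ∈ Z} → X) := fun α z => α ↑z with hres
  have hmaps : ∀ α ∈ Finset.univ.filter P, res α ∈ B := by
    intro α hα
    rw [hB, mem_filter]
    exact ⟨mem_univ _, fun z => (mem_filter.mp hα).2.1 _ (hZY z.2)⟩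
  rw [Finset.card_eq_sum_card_fiberwise hmaps]
  -- Step 1b : compute each fiber
  have hfiber : ∀ f ∈ B,
      #(Finset.filter (fun a => res a = f) (Finset.univ.filter P)) =
        (#(Finset.univ.image f)) ^ (m - k) *
          ((#(Finset.univ.image f)) + (n - m)) ^ (n - m) := by
    intro f hf
    have hfZ : ∀ z : {x // x ∈ Z}, f z ∈ Z := (mem_filter.mp hf).2
    set A : Finset X := Finset.univ.image f with hA
    have hAZ : A ⊆ Z := by
      intro a ha
      obtain ⟨z, -, hz⟩ := Finset.mem_image.mp ha
      rw [← hz]; exact hfZ z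
    set s : X → Finset X := fun x =>
      if hx : x ∈ Z then {f ⟨x, hx⟩} else if x ∈ Y then A else A ∪ (Finset.univ \ Y)
      with hs
    have hfilter_eq : Finset.filter (fun a => res a = f) (Finset.univ.filter P) =
        Finset.univ.filter (fun α : X → X => ∀ x, α x ∈ s x) := by
      rw [Finset.filter_filter]
      apply Finset.filter_congr
      intro α _
      constructor
      · rintro ⟨⟨hT, hreg⟩, hresf⟩ x
        have hres_app : ∀ z : {x // x ∈ Z}, α ↑z = f z := fun z => congrFun hresf z
        by_cases hx : x ∈ Z
        · rw [hs]; simp only [dif_pos hx, Finset.mem_singleton]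
          exact hres_app ⟨x, hx⟩
        · have hxA : α x ∈ Y → α x ∈ A := by
            intro hαY
            obtain ⟨z, hzZ, hz⟩ := hreg x hαY
            rw [hA]
            refine Finset.mem_image.mpr ⟨⟨z, hzZ⟩, mem_univ _, ?_⟩
            rw [← hz]; exact (hres_app ⟨z, hzZ⟩).symm
          by_cases hxY : x ∈ Y
          · rw [hs]; simp only [dif_neg hx, if_pos hxY]
            exact hxA (hZY (hT x hxY))
          · rw [hs]; simp only [dif_neg hx, if_neg hxY, Finset.mem_union]
            by_cases hαY : α x ∈ Y
            · exact Or.inl (hxA hαY)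
            · exact Or.inr (Finset.mem_sdiff.mpr ⟨mem_univ _, hαY⟩)
      · intro hall
        have hres_app : ∀ z : {x // x ∈ Z}, α ↑z = f z := by
          intro z
          have := hall ↑z
          rw [hs] at this
          simp only [dif_pos z.2, Finset.mem_singleton] at this
          rwa [Subtype.coe_eta] at this
        have hxA : ∀ x, α x ∈ Y → α x ∈ A := by
          intro x hαY
          by_cases hx : x ∈ Z
          · rw [hres_app ⟨x, hx⟩, hA]
            exact Finset.mem_image_of_mem f (mem_univ _)
          · have := hall x
            rw [hs] at this
            simp only [dif_neg hx] at this
            by_cases hxY : x ∈ Y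
            · rwa [if_pos hxY] at this
            · rw [if_neg hxY, Finset.mem_union] at this
              rcases this with h | h
              · exact h
              · exact absurd (Finset.mem_sdiff.mp h).2 (not_not_intro hαY)
        refine ⟨⟨?_, ?_⟩, ?_⟩
        · intro y hy
          by_cases hyZ : y ∈ Z
          · rw [hres_app ⟨y, hyZ⟩]; exact hfZ _
          · have := hall y
            rw [hs] at this
            simp only [dif_neg hyZ, if_pos hy] at this
            exact hAZ this
        · intro x hαY
          obtain ⟨z, -, hz⟩ := Finset.mem_image.mp (hxA x hαY)
          exact ⟨↑z, z.2, by rw [hres_app z, hz]⟩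
        · funext z
          exact hres_app z
    rw [hfilter_eq, card_filter_pi]
    -- now compute the product
    have hr : ∀ x ∈ Y \ Z, #(s x) = #A := by
      intro x hx
      obtain ⟨hxY, hxZ⟩ := Finset.mem_sdiff.mp hx
      rw [hs]; simp only [dif_neg hxZ, if_pos hxY]
    have hout : ∀ x ∈ Finset.univ \ Y, #(s x) = #A + (n - m) := by
      intro x hx
      obtain ⟨-, hxY⟩ := Finset.mem_sdiff.mp hx
      have hxZ : x ∉ Z := fun h => hxY (hZY h)
      rw [hs]; simp only [dif_neg hxZ, if_neg hxY]
      have hdisjA : Disjoint A (Finset.univ \ Y) := Finset.disjoint_left.mpr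
        fun a haA haD => (Finset.mem_sdiff.mp haD).2 (hZY (hAZ haA))
      rw [Finset.card_union_of_disjoint hdisjA, Finset.card_sdiff_of_subset (subset_univ Y),
        Finset.card_univ, ← hn, ← hm]
    have hone : ∀ x ∈ Z, #(s x) = 1 := by
      intro x hx
      rw [hs]; simp only [dif_pos hx, Finset.card_singleton]
    rw [← Finset.prod_sdiff (subset_univ Z)]
    have hZ1 : ∏ x ∈ Z, #(s x) = 1 := Finset.prod_eq_one hone
    rw [hZ1, mul_one]
    have hsub2 : Finset.univ \ Y ⊆ Finset.univ \ Z :=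
      Finset.sdiff_subset_sdiff (Finset.Subset.refl _) hZY
    rw [← Finset.prod_sdiff hsub2]
    have hYZ : (Finset.univ \ Z) \ (Finset.univ \ Y) = Y \ Z := by
      ext x
      simp only [Finset.mem_sdiff, Finset.mem_univ, true_and]
      tauto
    rw [hYZ]
    rw [Finset.prod_congr rfl hr, Finset.prod_congr rfl hout,
      Finset.prod_const, Finset.prod_const,
      Finset.card_sdiff_of_subset hZY, Finset.card_sdiff_of_subset (subset_univ Y), Finset.card_univ,
      ← hm, ← hk, ← hn]
  rw [Finset.sum_congr rfl hfiber]
  -- Step 2 : fiber over image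
  have hmaps2 : ∀ f ∈ B, Finset.univ.image f ∈ Z.powerset := by
    intro f hf
    rw [Finset.mem_powerset]
    intro a ha
    obtain ⟨z, -, hz⟩ := Finset.mem_image.mp ha
    rw [← hz]; exact (mem_filter.mp hf).2 z
  rw [← Finset.sum_fiberwise_of_maps_to hmaps2]
  have hinner : ∀ A ∈ Z.powerset,
      (∑ f ∈ B.filter (fun f => Finset.univ.image f = A),
        (#(Finset.univ.image f)) ^ (m - k) * ((#(Finset.univ.image f)) + (n - m)) ^ (n - m)) =
      nsurj k (#A) * ((#A) ^ (m - k) * ((#A) + (n - m)) ^ (n - m)) := by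
    intro A hA
    have hAZ : A ⊆ Z := Finset.mem_powerset.mp hA
    rw [Finset.sum_congr rfl (fun f hf => by
      rw [(mem_filter.mp hf).2])]
    rw [Finset.sum_const, smul_eq_mul]
    congr 1
    have : B.filter (fun f => Finset.univ.image f = A) =
        Finset.univ.filter (fun f : {x // x ∈ Z} → X => Finset.univ.image f = A) := by
      rw [hB, Finset.filter_filter]
      apply Finset.filter_congr
      intro f _
      constructor
      · rintro ⟨-, h⟩; exact h
      · intro h
        refine ⟨fun z => hAZ ?_, h⟩
        rw [← h]; exact Finset.mem_image_of_mem f (mem_univ _)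
    rw [this, card_filter_image_eq, Fintype.card_coe, ← hk]
  rw [Finset.sum_congr rfl hinner]
  -- Step 3 : group by cardinality
  have hmaps3 : ∀ A ∈ Z.powerset, #A ∈ Finset.range (k + 1) := by
    intro A hA
    rw [Finset.mem_range, Nat.lt_succ_iff]
    exact hk ▸ Finset.card_le_card (Finset.mem_powerset.mp hA)
  rw [← Finset.sum_fiberwise_of_maps_to hmaps3
    (fun A => nsurj k (#A) * ((#A) ^ (m - k) * ((#A) + (n - m)) ^ (n - m)))]
  have hinner3 : ∀ r ∈ Finset.range (k + 1),
      (∑ A ∈ Z.powerset.filter (fun A => #A = r),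
        nsurj k (#A) * ((#A) ^ (m - k) * ((#A) + (n - m)) ^ (n - m))) =
      k.choose r * (nsurj k r * (r ^ (m - k) * (r + (n - m)) ^ (n - m))) := by
    intro r _
    rw [Finset.sum_congr rfl (fun A hA => by rw [(mem_filter.mp hA).2])]
    rw [Finset.sum_const, smul_eq_mul, ← Finset.powersetCard_eq_filter,
      Finset.card_powersetCard, ← hk]
  rw [Finset.sum_congr rfl hinner3]
  -- Step 4 : drop the r = 0 term and finish
  have hsplit : Finset.range (k + 1) = insert 0 (Finset.Icc 1 k) := by
    ext a
    simp only [Finset.mem_range, Finset.mem_insert, Finset.mem_Icc]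
    constructor
    · intro h
      rcases Nat.eq_zero_or_pos a with rfl | hp
      · exact Or.inl rfl
      · exact Or.inr ⟨hp, Nat.lt_succ_iff.mp h⟩
    · rintro (rfl | ⟨-, h2⟩)
      · exact Nat.succ_pos k
      · exact Nat.lt_succ_of_le h2
  have h0notin : (0 : ℕ) ∉ Finset.Icc 1 k := by simp
  rw [hsplit, Finset.sum_insert h0notin]
  have hzero : nsurj k 0 = 0 := by
    obtain ⟨j, hj⟩ := Nat.exists_eq_add_of_le hk1
    rw [hj, Nat.add_comm 1 j, nsurj_zero_right]
  rw [hzero]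
  simp only [mul_zero, zero_mul, zero_add]
  apply Finset.sum_congr rfl
  intro r _
  rw [nsurj_eq]
  ring
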